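/- Let q₁ and q₂ be natural numbers with 0 ≤ q₁ < q₂. Define the vectors in ℝ²: v₁ = ( π√2·√(3q₁² + q₂²)/(q₂ − q₁), 0 ), v₂ = ( −π√2·(q₁ + q₂)²/((q₂ − q₁)·√(3q₁² + q₂²)), 2π√(q₁² + q₂²)/√(3q₁² + q₂²) ), f̃₁ = ( 2π√2·q₁/√(3q₁² + q₂²), −2π√(q₁² + q₂²)/√(3q₁² + q₂²) ), and f̃₂ = ( π√2·(q₁² + q₂²)/√(3q₁² + q₂²), 2π·q₁·√(q₁² + q₂²)/√(3q₁² + q₂²) ). Then f̃₁ = −v₁ − v₂ and f̃₂ = q₂·v₁ + q₁·v₂. -/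

import Mathlib

open Real

/-- Remark 10: the rotated lattice generators `f̃₁, f̃₂` are
integer combinations of the period lattice generators `v₁, v₂`:
`f̃₁ = −v₁ − v₂` and `f̃₂ = q₂·v₁ + q₁·v₂`. -/
theorem stmt18 (q₁ q₂ : ℕ) (hq : q₁ < q₂)
    (v₁ v₂ f₁ f₂ : ℝ × ℝ)
    (hv₁ : v₁ = (π * Real.sqrt 2 * Real.sqrt (3 * (q₁ : ℝ) ^ 2 + (q₂ : ℝ) ^ 2)
        / ((q₂ : ℝ) - (q₁ : ℝ)), 0))
    (hv₂ : v₂ = (-(π * Real.sqrt 2 * ((q₁ : ℝ) + (q₂ : ℝ)) ^ 2)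
        / (((q₂ : ℝ) - (q₁ : ℝ)) * Real.sqrt (3 * (q₁ : ℝ) ^ 2 + (q₂ : ℝ) ^ 2)),
        2 * π * Real.sqrt ((q₁ : ℝ) ^ 2 + (q₂ : ℝ) ^ 2)
        / Real.sqrt (3 * (q₁ : ℝ) ^ 2 + (q₂ : ℝ) ^ 2)))
    (hf₁ : f₁ = (2 * π * Real.sqrt 2 * (q₁ : ℝ)
        / Real.sqrt (3 * (q₁ : ℝ) ^ 2 + (q₂ : ℝ) ^ 2),
        -(2 * π * Real.sqrt ((q₁ : ℝ) ^ 2 + (q₂ : ℝ) ^ 2))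
        / Real.sqrt (3 * (q₁ : ℝ) ^ 2 + (q₂ : ℝ) ^ 2)))
    (hf₂ : f₂ = (π * Real.sqrt 2 * ((q₁ : ℝ) ^ 2 + (q₂ : ℝ) ^ 2)
        / Real.sqrt (3 * (q₁ : ℝ) ^ 2 + (q₂ : ℝ) ^ 2),
        2 * π * (q₁ : ℝ) * Real.sqrt ((q₁ : ℝ) ^ 2 + (q₂ : ℝ) ^ 2)
        / Real.sqrt (3 * (q₁ : ℝ) ^ 2 + (q₂ : ℝ) ^ 2))) :
    f₁ = -v₁ - v₂ ∧ f₂ = (q₂ : ℝ) • v₁ + (q₁ : ℝ) • v₂ := by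
  subst hv₁ hv₂ hf₁ hf₂
  have hq' : (q₁ : ℝ) < (q₂ : ℝ) := by exact_mod_cast hq
  have hd : (q₂ : ℝ) - (q₁ : ℝ) ≠ 0 := by linarith
  have hpos : (0:ℝ) < 3 * (q₁ : ℝ) ^ 2 + (q₂ : ℝ) ^ 2 := by
    have h0 : (0:ℝ) ≤ (q₁ : ℝ) := Nat.cast_nonneg _
    nlinarith [sq_nonneg ((q₁:ℝ))]
  set s := Real.sqrt (3 * (q₁ : ℝ) ^ 2 + (q₂ : ℝ) ^ 2) with hs_def
  have hs : s ≠ 0 := by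
    rw [hs_def]
    exact Real.sqrt_ne_zero'.2 hpos
  have hs2 : s ^ 2 = 3 * (q₁ : ℝ) ^ 2 + (q₂ : ℝ) ^ 2 := Real.sq_sqrt hpos.le
  constructor <;> refine Prod.ext ?_ ?_ <;>
    simp only [Prod.fst_neg, Prod.snd_neg, Prod.fst_sub, Prod.snd_sub,
      Prod.smul_mk, Prod.fst_add, Prod.snd_add, smul_eq_mul] <;>
    field_simp
  · linear_combination hs2
  · ring
  · linear_combination (-(q₂:ℝ)) * hs2
  · ring
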